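/- Let H be the digraph with vertex set {1,2,3,4} and arc set {12, 21, 23, 34, 41} (a copy of C4'). Given a digraph D, let D' be the digraph obtained from D by replacing every arc uv of D with the gadget consisting of three new vertices x_{uv}, y_{uv}, z_{uv} and the four arcs u→x_{uv}, x_{uv}→y_{uv}, y_{uv}→z_{uv}, v→z_{uv} (so D' has no arcs between vertices of D, and the gadget vertices of different arcs are distinct). Define costs on D': for every t ∈ V(D), c_3(t) = 0 and c_1(t) = c_2(t) = c_4(t) = 1; all costs of the gadget vertices are 0. Then a homomorphism of D' to H exists, and the minimum cost of a homomorphism of D' to H equals |V(D)| − α(D). -/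
import Mathlib


namespace MinHomC4P

/-- the target digraph: vertices 1,2,3,4 (as 0,1,2,3 : Fin 4) and arcs
{12, 21, 23, 34, 41}; a copy of C4'. -/
def HArc : Fin 4 → Fin 4 → Prop := fun a b =>
  (a, b) ∈ ([(0,1),(1,0),(1,2),(2,3),(3,0)] : List (Fin 4 × Fin 4))

/-- vertex set of D': the vertices of D together with three gadget vertices
x_{uv} = (e,0), y_{uv} = (e,1), z_{uv} = (e,2) for every arc e = uv of D. -/
abbrev GV (α : Type*) (Ad : α → α → Prop) : Type _ :=
  α ⊕ ({p : α × α // Ad p.1 p.2} × Fin 3)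

/-- arcs of D': for each arc e = uv of D the gadget arcs
u→x_e, x_e→y_e, y_e→z_e, v→z_e. -/
def GArc {α : Type*} (Ad : α → α → Prop) : GV α Ad → GV α Ad → Prop
  | Sum.inl u, Sum.inr (e, i) => (u = e.1.1 ∧ i = 0) ∨ (u = e.1.2 ∧ i = 2)
  | Sum.inr (e, i), Sum.inr (e', i') => e = e' ∧ ((i = 0 ∧ i' = 1) ∨ (i = 1 ∧ i' = 2))
  | _, _ => False

/-- costs: c_3(t) = 0 and c_1(t) = c_2(t) = c_4(t) = 1 for t ∈ V(D) (vertex 3 is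
index 2 : Fin 4); all costs of gadget vertices are 0. -/
def cost {α : Type*} (Ad : α → α → Prop) : Fin 4 → GV α Ad → ℕ
  | h, Sum.inl _ => if h = 2 then 0 else 1
  | _, Sum.inr _ => 0


instance : DecidableRel HArc := fun a b =>
  inferInstanceAs (Decidable ((a, b) ∈ ([(0,1),(1,0),(1,2),(2,3),(3,0)] : List (Fin 4 × Fin 4))))

lemma key : ∀ p q r : Fin 4, HArc 2 p → HArc p q → HArc q r → HArc 2 r → False := by
  decide

section
variable {α : Type*} [Fintype α] [DecidableEq α] (Ad : α → α → Prop) [DecidableRel Ad]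

def homS (S : Finset α) : GV α Ad → Fin 4
  | Sum.inl v => if v ∈ S then 2 else 0
  | Sum.inr (e, i) =>
    if e.1.1 ∈ S then (![3,0,1] : Fin 3 → Fin 4) i
    else if e.1.2 ∈ S then (![1,2,3] : Fin 3 → Fin 4) i
    else (![1,0,1] : Fin 3 → Fin 4) i

set_option linter.unusedSectionVars false in
lemma homS_hom (S : Finset α) (hS : ∀ a ∈ S, ∀ b ∈ S, a ≠ b → ¬ Ad a b)
    (hirr : Irreflexive Ad) :
    ∀ x y, GArc Ad x y → HArc (homS Ad S x) (homS Ad S y) := by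
  rintro (u | ⟨e, i⟩) (v | ⟨e', i'⟩) h
  · exact h.elim
  · rcases h with ⟨rfl, rfl⟩ | ⟨rfl, rfl⟩
    · simp only [homS]
      split_ifs <;> decide
    · have hne : e'.1.1 ≠ e'.1.2 := fun hh => hirr _ (hh ▸ e'.2)
      by_cases ha : e'.1.1 ∈ S <;> by_cases hb : e'.1.2 ∈ S
      · exact absurd e'.2 (hS _ ha _ hb hne)
      all_goals simp [homS, ha, hb] <;> decide
  · exact h.elim
  · obtain ⟨rfl, h⟩ := h
    rcases h with ⟨rfl, rfl⟩ | ⟨rfl, rfl⟩ <;>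
      · simp only [homS]; split_ifs <;> decide

lemma sum_ind (S : Finset α) :
    ∑ v : α, (if v ∈ S then (0:ℕ) else 1) = Fintype.card α - S.card := by
  rw [Finset.sum_ite, Finset.sum_const, Finset.sum_const, smul_eq_mul, smul_eq_mul,
    mul_zero, mul_one, zero_add, Finset.filter_not, Finset.filter_univ_mem,
    Finset.card_sdiff_of_subset (Finset.subset_univ S), Finset.card_univ]

lemma cost_homS (S : Finset α) :
    (∑ w, cost Ad (homS Ad S w) w) = Fintype.card α - S.card := by
  rw [Fintype.sum_sum_type]
  have h2 : ∀ w : {p : α × α // Ad p.1 p.2} × Fin 3,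
      cost Ad (homS Ad S (Sum.inr w)) (Sum.inr w) = 0 := fun w => rfl
  simp only [h2, Finset.sum_const_zero, add_zero]
  have h1 : ∀ v : α, cost Ad (homS Ad S (Sum.inl v)) (Sum.inl v)
      = if v ∈ S then 0 else 1 := by
    intro v
    simp only [homS, cost]
    split_ifs <;> simp_all
  simp only [h1, sum_ind]

end

/-- Lemma 4.1: a homomorphism of D' to H exists, and the minimum cost of a homomorphism
of D' to H equals |V(D)| − α(D). -/
theorem stmt13 {α : Type*} [Fintype α] [DecidableEq α]
    (Ad : α → α → Prop) [DecidableRel Ad] (hirr : Irreflexive Ad) :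
    ∃ m : ℕ,
      IsGreatest {n : ℕ | ∃ S : Finset α,
        (∀ a ∈ S, ∀ b ∈ S, a ≠ b → ¬ Ad a b) ∧ S.card = n} m ∧
      (∃ f : GV α Ad → Fin 4, ∀ x y, GArc Ad x y → HArc (f x) (f y)) ∧
      IsLeast {n : ℕ | ∃ f : GV α Ad → Fin 4,
          (∀ x y, GArc Ad x y → HArc (f x) (f y)) ∧ (∑ w, cost Ad (f w) w) = n}
        (Fintype.card α - m) := by
  classical
  set indep : Finset α → Prop := fun S => ∀ a ∈ S, ∀ b ∈ S, a ≠ b → ¬Ad a b with hindep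
  set T : Finset ℕ := (Finset.univ.powerset.filter indep).image Finset.card with hT
  have hne : T.Nonempty := ⟨0, by simp [hT, hindep]⟩
  set m := T.max' hne with hm
  have hmemT : ∀ n, n ∈ T ↔ ∃ S : Finset α, indep S ∧ S.card = n := by
    intro n
    simp [hT, Finset.mem_image, Finset.mem_filter]
  obtain ⟨S₀, hS₀i, hS₀c⟩ := (hmemT m).1 (T.max'_mem hne)
  refine ⟨m, ⟨⟨S₀, hS₀i, hS₀c⟩, ?_⟩, ⟨homS Ad S₀, homS_hom Ad S₀ hS₀i hirr⟩, ?_, ?_⟩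
  · rintro n ⟨S, hSi, hSc⟩
    exact T.le_max' n ((hmemT n).2 ⟨S, hSi, hSc⟩)
  · exact ⟨homS Ad S₀, homS_hom Ad S₀ hS₀i hirr, by rw [cost_homS, hS₀c]⟩
  · rintro n ⟨f, hf, rfl⟩
    set Sf : Finset α := Finset.univ.filter (fun v => f (Sum.inl v) = 2) with hSf
    have hSfi : indep Sf := by
      intro a ha b hb hab hAd
      have ha2 : f (Sum.inl a) = 2 := (Finset.mem_filter.1 ha).2
      have hb2 : f (Sum.inl b) = 2 := (Finset.mem_filter.1 hb).2
      set e : {p : α × α // Ad p.1 p.2} := ⟨(a, b), hAd⟩ with he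
      have h1 := hf (Sum.inl a) (Sum.inr (e, 0)) (Or.inl ⟨rfl, rfl⟩)
      have h2 := hf (Sum.inr (e, 0)) (Sum.inr (e, 1)) ⟨rfl, Or.inl ⟨rfl, rfl⟩⟩
      have h3 := hf (Sum.inr (e, 1)) (Sum.inr (e, 2)) ⟨rfl, Or.inr ⟨rfl, rfl⟩⟩
      have h4 := hf (Sum.inl b) (Sum.inr (e, 2)) (Or.inr ⟨rfl, rfl⟩)
      rw [ha2] at h1
      rw [hb2] at h4
      exact key _ _ _ h1 h2 h3 h4
    have hcost : (∑ w, cost Ad (f w) w) = Fintype.card α - Sf.card := by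
      rw [Fintype.sum_sum_type]
      have h2 : ∀ w : {p : α × α // Ad p.1 p.2} × Fin 3,
          cost Ad (f (Sum.inr w)) (Sum.inr w) = 0 := fun w => rfl
      simp only [h2, Finset.sum_const_zero, add_zero]
      have h1 : ∀ v : α, cost Ad (f (Sum.inl v)) (Sum.inl v)
          = if v ∈ Sf then 0 else 1 := by
        intro v
        have hv : (v ∈ Sf) = (f (Sum.inl v) = 2) := by simp [hSf]
        simp only [cost, hv]
      simp only [h1, sum_ind]
    rw [hcost]
    exact Nat.sub_le_sub_left (T.le_max' _ ((hmemT _).2 ⟨Sf, hSfi, rfl⟩)) _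

end MinHomC4P
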